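/- Let d ≥ 1, M > 0 and K₂ > 0. There exist K₁ > 0 and h₀ ∈ (0,1), depending only on d, M and K₂, such that the following holds. Let B : ℝ^d → ℝ be twice continuously differentiable with |B(y)| ≤ M, |∂B/∂y_i(y)| ≤ M and |∂²B/∂y_i∂y_j(y)| ≤ M for all y ∈ ℝ^d and all i, j. Let β ∈ ℝ^d and S ∈ ℝ^{d×d} have all entries bounded in absolute value by M, let x ∈ ℝ^d and h ∈ (0, h₀], and let ξ be a random vector uniformly distributed on {−1,1}^d (its d components are independent, each equal to ±1 with probability 1/2). Then E[ exp( −K₁ h + K₂ ( B(x + hβ + √h · Sξ) − B(x) ) ) ] ≤ 1 − h. -/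

import Mathlib

lemma lin_apply_bound {d : ℕ} (f : (Fin d → ℝ) →L[ℝ] ℝ) (c : ℝ)
    (hc : ∀ i, |f (Pi.single i 1)| ≤ c) (v : Fin d → ℝ) :
    |f v| ≤ d * c * ‖v‖ := by
  have hv : v = ∑ i, v i • (Pi.single i 1 : Fin d → ℝ) := by
    simp [← Pi.single_smul, Finset.univ_sum_single]
  have hfv : f v = ∑ i, v i * f (Pi.single i 1) := by
    conv_lhs => rw [hv]
    simp [map_sum]
  rw [hfv]
  calc |∑ i, v i * f (Pi.single i 1)| ≤ ∑ i, |v i * f (Pi.single i 1)| :=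
        Finset.abs_sum_le_sum_abs _ _
    _ ≤ ∑ _i : Fin d, ‖v‖ * c := by
        refine Finset.sum_le_sum fun i _ => ?_
        rw [abs_mul]
        exact mul_le_mul (by simpa using norm_le_pi_norm v i) (hc i) (abs_nonneg _)
          (norm_nonneg _)
    _ = d * c * ‖v‖ := by simp [Finset.sum_const, Finset.card_univ]; ring

lemma bilin_norm_bound {d : ℕ} (f2 : (Fin d → ℝ) →L[ℝ] ((Fin d → ℝ) →L[ℝ] ℝ))
    (c : ℝ) (hc0 : 0 ≤ c)
    (hc : ∀ i j, |f2 (Pi.single i 1) (Pi.single j 1)| ≤ c) :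
    ‖f2‖ ≤ d * (d * c) := by
  have h1 : ∀ (u : Fin d → ℝ) (j : Fin d), |f2 u (Pi.single j 1)| ≤ d * c * ‖u‖ := by
    intro u j
    have := lin_apply_bound (f2.flip (Pi.single j 1)) c (fun i => by simpa using hc i j) u
    simpa using this
  refine ContinuousLinearMap.opNorm_le_bound _ (by positivity) fun u => ?_
  refine ContinuousLinearMap.opNorm_le_bound _ (by positivity) fun v => ?_
  have := lin_apply_bound (f2 u) (d * c * ‖u‖) (h1 u) v
  rw [Real.norm_eq_abs]
  calc |f2 u v| ≤ ↑d * (↑d * c * ‖u‖) * ‖v‖ := this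
    _ = ↑d * (↑d * c) * ‖u‖ * ‖v‖ := by ring

lemma taylor_bound {d : ℕ} (B : (Fin d → ℝ) → ℝ) (hB : ContDiff ℝ 2 B) (L : ℝ)
    (hL : ∀ y, ‖fderiv ℝ (fderiv ℝ B) y‖ ≤ L) (hL0 : 0 ≤ L) (x v : Fin d → ℝ) :
    |B (x + v) - B x - fderiv ℝ B x v| ≤ L * ‖v‖ * ‖v‖ := by
  have hB1 : ContDiff ℝ 1 (fderiv ℝ B) := hB.fderiv_right (by norm_num)
  have hdiff : Differentiable ℝ B := hB.differentiable (by norm_num)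
  have hlip : ∀ y : Fin d → ℝ, ‖fderiv ℝ B y - fderiv ℝ B x‖ ≤ L * ‖y - x‖ := fun y =>
    Convex.norm_image_sub_le_of_norm_fderiv_le
      (fun z _ => hB1.differentiable (by norm_num) z) (fun z _ => hL z) convex_univ
      (Set.mem_univ x) (Set.mem_univ y)
  have hmem : x + v ∈ Metric.closedBall x ‖v‖ := by
    simp [Metric.mem_closedBall, dist_eq_norm, add_sub_cancel_left]
  have key := Convex.norm_image_sub_le_of_norm_fderiv_le' (f := B) (φ := fderiv ℝ B x)
    (C := L * ‖v‖) (y := x + v) (x := x) (fun z _ => hdiff z)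
    (fun z hz => le_trans (hlip z)
      (mul_le_mul_of_nonneg_left (by simpa [dist_eq_norm] using hz) hL0))
    (convex_closedBall x ‖v‖) (Metric.mem_closedBall_self (norm_nonneg v)) hmem
  simpa [add_sub_cancel_left] using key

lemma sum_sign_cancel {d : ℕ} (f : (Fin d → ℝ) →L[ℝ] ℝ) (S : Matrix (Fin d) (Fin d) ℝ) :
    ∑ ε : Fin d → Bool, f (S.mulVec (fun i => if ε i then (1 : ℝ) else -1)) = 0 := by
  set F : (Fin d → Bool) → ℝ := fun ε => f (S.mulVec fun i => if ε i then (1 : ℝ) else -1)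
    with hF
  have inv : Function.Involutive (fun ε : Fin d → Bool => fun i => !(ε i)) := fun ε => by
    funext i; simp
  set e := Function.Involutive.toPerm _ inv with he
  have h1 : ∑ ε, F (e ε) = ∑ ε, F ε := Equiv.sum_comp e F
  have h2 : ∀ ε, F (e ε) = -F ε := by
    intro ε
    have hx : (fun i => if (!(ε i)) then (1 : ℝ) else -1)
        = -(fun i => if ε i then (1 : ℝ) else -1) := by
      funext i; simp only [Pi.neg_apply]; cases h : ε i <;> simp [h]
    simp only [hF, he, Function.Involutive.toPerm, Equiv.coe_fn_mk]
    rw [hx, Matrix.mulVec_neg, map_neg]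
  rw [Finset.sum_congr rfl (fun ε _ => h2 ε), Finset.sum_neg_distrib] at h1
  linarith

set_option maxHeartbeats 1000000 in
/-- Interior (Case 1) barrier estimate of Lemma 5.6: for `K₁` large enough (depending
only on `d`, `M`, `K₂`) and `h` small, one interior Euler step with Rademacher
increments decreases the expected barrier `e^{-K₁ t} e^{K₂ B(·)}` by a factor `1 - h`.
The expectation over the Rademacher vector is the average over the `2^d` sign
patterns `ε : Fin d → Bool`. -/
theorem barrier_interior_step (d : ℕ) (hd : 1 ≤ d) (M K₂ : ℝ) (hM : 0 < M)
    (hK₂ : 0 < K₂) :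
    ∃ K₁ : ℝ, 0 < K₁ ∧ ∃ h₀ : ℝ, 0 < h₀ ∧ h₀ < 1 ∧
      ∀ B : (Fin d → ℝ) → ℝ, ContDiff ℝ 2 B →
      (∀ y : Fin d → ℝ, |B y| ≤ M) →
      (∀ (y : Fin d → ℝ) (i : Fin d), |fderiv ℝ B y (Pi.single i 1)| ≤ M) →
      (∀ (y : Fin d → ℝ) (i j : Fin d),
        |iteratedFDeriv ℝ 2 B y ![Pi.single i 1, Pi.single j 1]| ≤ M) →
      ∀ (β : Fin d → ℝ) (S : Matrix (Fin d) (Fin d) ℝ),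
        (∀ i, |β i| ≤ M) → (∀ i j, |S i j| ≤ M) →
      ∀ (x : Fin d → ℝ) (h : ℝ), 0 < h → h ≤ h₀ →
      (∑ ε : Fin d → Bool,
          Real.exp (-K₁ * h +
            K₂ * (B (x + h • β
                + Real.sqrt h • S.mulVec (fun i => if ε i then (1 : ℝ) else -1))
              - B x))) / 2 ^ d
        ≤ 1 - h := by
  have hd1 : (1 : ℝ) ≤ d := by exact_mod_cast hd
  obtain ⟨C₁, hC₁def⟩ : ∃ c : ℝ, c = ((d : ℝ) + 1) * M := ⟨_, rfl⟩
  obtain ⟨C₂, hC₂def⟩ : ∃ c : ℝ, c = (d : ℝ) * M ^ 2 + (d : ℝ) * ((d : ℝ) * M) * C₁ ^ 2 :=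
    ⟨_, rfl⟩
  obtain ⟨C₃, hC₃def⟩ : ∃ c : ℝ, c = (d : ℝ) ^ 2 * M ^ 2 + C₂ := ⟨_, rfl⟩
  obtain ⟨K₁, hK₁def⟩ : ∃ c : ℝ, c = 2 + K₂ * C₂ + 2 * K₂ ^ 2 * C₃ ^ 2 := ⟨_, rfl⟩
  obtain ⟨D, hDdef⟩ : ∃ c : ℝ, c = 2 * K₁ ^ 2 + 4 * K₂ ^ 2 * C₃ ^ 2 + 2 := ⟨_, rfl⟩
  have hC₁ : 0 < C₁ := by rw [hC₁def]; positivity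
  have hC₂ : 0 < C₂ := by rw [hC₂def]; positivity
  have hC₃ : 0 < C₃ := by rw [hC₃def]; positivity
  have hK₂C₂ : 0 ≤ K₂ * C₂ := mul_nonneg hK₂.le hC₂.le
  have hK₂C₃ : 0 ≤ K₂ ^ 2 * C₃ ^ 2 := mul_nonneg (sq_nonneg K₂) (sq_nonneg C₃)
  have hK₁2 : 2 ≤ K₁ := by rw [hK₁def]; linarith
  have hK₁ : 0 < K₁ := by linarith
  have hD : 0 < D := by rw [hDdef]; positivity
  have hD10 : 2 ≤ D := by rw [hDdef]; linarith [sq_nonneg K₁]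
  refine ⟨K₁, hK₁, 1 / D, by positivity, by rw [div_lt_one hD]; linarith, ?_⟩
  intro B hB hBbd hB1 hB2 β S hβ hS x h hh hhle
  have hhD : h * (2 * K₁ ^ 2 + 4 * K₂ ^ 2 * C₃ ^ 2 + 2) ≤ 1 := by
    rw [le_div_iff₀ hD, hDdef] at hhle; linarith
  have hK₂C₃h : 0 ≤ K₂ ^ 2 * C₃ ^ 2 * h := mul_nonneg hK₂C₃ hh.le
  have hK₁sqh : 0 ≤ K₁ ^ 2 * h := mul_nonneg (sq_nonneg K₁) hh.le
  have hK1sq : K₁ ^ 2 * h ≤ 1 / 2 := by linarith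
  have hK23 : K₂ ^ 2 * C₃ ^ 2 * h ≤ 1 / 4 := by linarith
  have hh1 : h ≤ 1 := by linarith
  -- square root facts
  have hsq : Real.sqrt h * Real.sqrt h = h := Real.mul_self_sqrt hh.le
  have hs0 : 0 ≤ Real.sqrt h := Real.sqrt_nonneg h
  have hs1 : Real.sqrt h ≤ 1 := by
    rw [show (1 : ℝ) = Real.sqrt 1 by simp]; exact Real.sqrt_le_sqrt hh1
  have hhs : h ≤ Real.sqrt h := by
    have h' := mul_le_of_le_one_left hs0 hs1
    linarith
  -- second derivative operator norm bound
  have hL : ∀ y, ‖fderiv ℝ (fderiv ℝ B) y‖ ≤ (d : ℝ) * ((d : ℝ) * M) := by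
    intro y
    refine bilin_norm_bound _ M hM.le fun i j => ?_
    have h2 := hB2 y i j
    rw [iteratedFDeriv_two_apply] at h2
    simpa using h2
  -- first derivative at x
  have hfv : ∀ w : Fin d → ℝ, |fderiv ℝ B x w| ≤ (d : ℝ) * M * ‖w‖ :=
    lin_apply_bound (fderiv ℝ B x) M (hB1 x)
  have hdM : (0 : ℝ) ≤ (d : ℝ) * M := by positivity
  have hβn : ‖β‖ ≤ M := by
    rw [pi_norm_le_iff_of_nonneg hM.le]; intro i; simpa [Real.norm_eq_abs] using hβ i
  have hSv : ∀ ε : Fin d → Bool,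
      ‖S.mulVec (fun i => if ε i then (1 : ℝ) else -1)‖ ≤ (d : ℝ) * M := by
    intro ε
    rw [pi_norm_le_iff_of_nonneg hdM]
    intro i
    rw [Real.norm_eq_abs, Matrix.mulVec, dotProduct]
    calc |∑ j, S i j * (if ε j then (1 : ℝ) else -1)|
        ≤ ∑ j, |S i j * (if ε j then (1 : ℝ) else -1)| := Finset.abs_sum_le_sum_abs _ _
      _ ≤ ∑ _j : Fin d, M := by
          refine Finset.sum_le_sum fun j _ => ?_
          rw [abs_mul]
          have : |(if ε j then (1 : ℝ) else -1)| = 1 := by cases hej : ε j <;> simp [hej]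
          rw [this, mul_one]; exact hS i j
      _ = (d : ℝ) * M := by simp [Finset.sum_const, Finset.card_univ, mul_comm]
  -- norm of the increment
  have hvn : ∀ ε : Fin d → Bool,
      ‖h • β + Real.sqrt h • S.mulVec (fun i => if ε i then (1 : ℝ) else -1)‖
        ≤ Real.sqrt h * C₁ := by
    intro ε
    rw [pi_norm_le_iff_of_nonneg (by positivity)]
    intro i
    have h2 : |S.mulVec (fun i => if ε i then (1 : ℝ) else -1) i| ≤ (d : ℝ) * M := by
      simpa [Real.norm_eq_abs] using
        (norm_le_pi_norm (S.mulVec (fun i => if ε i then (1 : ℝ) else -1)) i).trans (hSv ε)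
    simp only [Pi.add_apply, Pi.smul_apply, smul_eq_mul, Real.norm_eq_abs]
    calc |h * β i + Real.sqrt h * S.mulVec (fun i => if ε i then (1 : ℝ) else -1) i|
        ≤ h * |β i| + Real.sqrt h * |S.mulVec (fun i => if ε i then (1 : ℝ) else -1) i| := by
          refine (abs_add_le _ _).trans ?_
          rw [abs_mul, abs_mul, abs_of_nonneg hh.le, abs_of_nonneg hs0]
      _ ≤ Real.sqrt h * C₁ := by
          rw [hC₁def]
          linarith [mul_le_mul_of_nonneg_left (hβ i) hh.le,
            mul_le_mul_of_nonneg_right hhs hM.le,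
            mul_le_mul_of_nonneg_left h2 hs0]
  -- linear part and remainder
  obtain ⟨A, hAdef⟩ : ∃ A' : (Fin d → Bool) → ℝ, ∀ ε,
      A' ε = fderiv ℝ B x (S.mulVec (fun i => if ε i then (1 : ℝ) else -1)) :=
    ⟨_, fun _ => rfl⟩
  obtain ⟨ρ, hρdef⟩ : ∃ ρ' : (Fin d → Bool) → ℝ, ∀ ε,
      ρ' ε = B (x + h • β
          + Real.sqrt h • S.mulVec (fun i => if ε i then (1 : ℝ) else -1)) - B x
        - Real.sqrt h * A ε := ⟨_, fun _ => rfl⟩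
  have hAbd : ∀ ε, |A ε| ≤ (d : ℝ) ^ 2 * M ^ 2 := by
    intro ε
    rw [hAdef]
    refine (hfv _).trans ?_
    have := mul_le_mul_of_nonneg_left (hSv ε) hdM
    linarith
  have hρbd : ∀ ε, |ρ ε| ≤ h * C₂ := by
    intro ε
    obtain ⟨w, hwdef⟩ : ∃ w' : Fin d → ℝ,
        w' = S.mulVec (fun i => if ε i then (1 : ℝ) else -1) := ⟨_, rfl⟩
    have htay := taylor_bound B hB ((d : ℝ) * ((d : ℝ) * M)) hL (by positivity) x
      (h • β + Real.sqrt h • w)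
    have hassoc : x + h • β + Real.sqrt h • w = x + (h • β + Real.sqrt h • w) := by
      rw [add_assoc]
    have hfsplit : fderiv ℝ B x (h • β + Real.sqrt h • w)
        = h * fderiv ℝ B x β + Real.sqrt h * A ε := by
      rw [map_add, map_smul, map_smul, smul_eq_mul, smul_eq_mul, hAdef ε, hwdef]
    have hρeq : ρ ε = (B (x + (h • β + Real.sqrt h • w)) - B x
        - fderiv ℝ B x (h • β + Real.sqrt h • w)) + h * fderiv ℝ B x β := by
      rw [hρdef ε, ← hwdef, hfsplit, ← hassoc]; ring
    have hvb : ‖h • β + Real.sqrt h • w‖ ≤ Real.sqrt h * C₁ := by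
      rw [hwdef]; exact hvn ε
    have hfβ : |fderiv ℝ B x β| ≤ (d : ℝ) * M * M := by
      refine (hfv β).trans ?_
      linarith [mul_le_mul_of_nonneg_left hβn hdM]
    have habs := abs_add_le (B (x + (h • β + Real.sqrt h • w)) - B x
        - fderiv ℝ B x (h • β + Real.sqrt h • w)) (h * fderiv ℝ B x β)
    rw [← hρeq] at habs
    have hv2 : ‖h • β + Real.sqrt h • w‖ * ‖h • β + Real.sqrt h • w‖ ≤ h * C₁ ^ 2 := by
      have ht := mul_le_mul hvb hvb (norm_nonneg _) (mul_nonneg hs0 hC₁.le)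
      have heq : (Real.sqrt h * C₁) * (Real.sqrt h * C₁) = h * C₁ ^ 2 := by
        calc (Real.sqrt h * C₁) * (Real.sqrt h * C₁)
            = (Real.sqrt h * Real.sqrt h) * C₁ ^ 2 := by ring
          _ = h * C₁ ^ 2 := by rw [hsq]
      linarith
    have h1 := mul_le_mul_of_nonneg_left hv2
      (show (0 : ℝ) ≤ (d : ℝ) * ((d : ℝ) * M) by positivity)
    have h2 : |h * fderiv ℝ B x β| ≤ h * ((d : ℝ) * M * M) := by
      rw [abs_mul, abs_of_nonneg hh.le]
      exact mul_le_mul_of_nonneg_left hfβ hh.le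
    rw [hC₂def]
    linarith [htay, habs]
  -- cancellation of the linear part
  have hAsum : ∑ ε : Fin d → Bool, A ε = 0 := by
    rw [Finset.sum_congr rfl (fun ε _ => hAdef ε)]
    exact sum_sign_cancel (fderiv ℝ B x) S
  -- per-sign-pattern exponential bound
  have main : ∀ ε : Fin d → Bool,
      Real.exp (-K₁ * h +
          K₂ * (B (x + h • β
              + Real.sqrt h • S.mulVec (fun i => if ε i then (1 : ℝ) else -1))
            - B x))
        ≤ (1 - K₁ * h + (3 / 2) * K₁ ^ 2 * h ^ 2 + (3 / 2) * K₂ ^ 2 * C₃ ^ 2 * h)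
          + (K₂ * Real.sqrt h * A ε + K₂ * ρ ε) := by
    intro ε
    have hΔ : B (x + h • β
          + Real.sqrt h • S.mulVec (fun i => if ε i then (1 : ℝ) else -1)) - B x
        = Real.sqrt h * A ε + ρ ε := by
      rw [hρdef ε]; ring
    rw [hΔ]
    obtain ⟨u, hudef⟩ : ∃ u' : ℝ,
        u' = -K₁ * h + K₂ * (Real.sqrt h * A ε + ρ ε) := ⟨_, rfl⟩
    rw [← hudef]
    have h1 : |Real.sqrt h * A ε + ρ ε| ≤ Real.sqrt h * C₃ := by
      refine (abs_add_le _ _).trans ?_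
      have h2 : |Real.sqrt h * A ε| ≤ Real.sqrt h * ((d : ℝ) ^ 2 * M ^ 2) := by
        rw [abs_mul, abs_of_nonneg hs0]
        exact mul_le_mul_of_nonneg_left (hAbd ε) hs0
      have h3 := hρbd ε
      have h4 := mul_le_mul_of_nonneg_right hhs hC₂.le
      rw [hC₃def]
      nlinarith [h2, h3, h4]
    have hub : |u| ≤ K₁ * h + K₂ * (Real.sqrt h * C₃) := by
      rw [hudef]
      calc |(-K₁) * h + K₂ * (Real.sqrt h * A ε + ρ ε)|
          ≤ |(-K₁) * h| + |K₂ * (Real.sqrt h * A ε + ρ ε)| := abs_add_le _ _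
        _ ≤ K₁ * h + K₂ * (Real.sqrt h * C₃) := by
            rw [abs_mul, abs_mul, abs_neg, abs_of_nonneg hh.le, abs_of_nonneg hK₁.le,
              abs_of_nonneg hK₂.le]
            linarith [mul_le_mul_of_nonneg_left h1 hK₂.le]
    have hK₁h : K₁ * h ≤ 1 / 2 := by
      have hx : 0 ≤ K₁ * (K₁ - 1) * h :=
        mul_nonneg (mul_nonneg hK₁.le (by linarith)) hh.le
      linarith [hx, hK1sq]
    have ha2 : (K₂ * (Real.sqrt h * C₃)) ^ 2 = K₂ ^ 2 * C₃ ^ 2 * h := by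
      calc (K₂ * (Real.sqrt h * C₃)) ^ 2
          = K₂ ^ 2 * C₃ ^ 2 * (Real.sqrt h * Real.sqrt h) := by ring
        _ = K₂ ^ 2 * C₃ ^ 2 * h := by rw [hsq]
    have hK₂s : K₂ * (Real.sqrt h * C₃) ≤ 1 / 2 := by
      linarith [sq_nonneg (K₂ * (Real.sqrt h * C₃) - 1 / 2), ha2, hK23]
    have hu1 : |u| ≤ 1 := by linarith
    have hexp := Real.exp_bound hu1 (n := 2) (by norm_num)
    norm_num [Finset.sum_range_succ, Nat.factorial] at hexp
    have husq : u ^ 2 ≤ 2 * K₁ ^ 2 * h ^ 2 + 2 * K₂ ^ 2 * C₃ ^ 2 * h := by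
      have h4 : u ^ 2 ≤ (K₁ * h + K₂ * (Real.sqrt h * C₃)) ^ 2 := by
        rw [← sq_abs u]
        exact pow_le_pow_left₀ (abs_nonneg u) hub 2
      linarith [h4, sq_nonneg (K₁ * h - K₂ * (Real.sqrt h * C₃)), ha2]
    have hexp2 : Real.exp u ≤ 1 + u + 3 / 4 * u ^ 2 := by
      have h5 := (abs_le.mp hexp).2
      linarith
    calc Real.exp u ≤ 1 + u + 3 / 4 * u ^ 2 := hexp2
      _ ≤ (1 - K₁ * h + (3 / 2) * K₁ ^ 2 * h ^ 2 + (3 / 2) * K₂ ^ 2 * C₃ ^ 2 * h)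
          + (K₂ * Real.sqrt h * A ε + K₂ * ρ ε) := by
          rw [hudef] at husq ⊢
          linarith [husq]
  -- summing up
  have hcard : (Finset.univ : Finset (Fin d → Bool)).card = 2 ^ d := by
    simp [Finset.card_univ]
  have hsumbd : (∑ ε : Fin d → Bool,
      Real.exp (-K₁ * h +
        K₂ * (B (x + h • β
            + Real.sqrt h • S.mulVec (fun i => if ε i then (1 : ℝ) else -1))
          - B x)))
      ≤ (2 : ℝ) ^ d * ((1 - K₁ * h + (3 / 2) * K₁ ^ 2 * h ^ 2
          + (3 / 2) * K₂ ^ 2 * C₃ ^ 2 * h) + K₂ * (h * C₂)) := by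
    calc (∑ ε : Fin d → Bool,
        Real.exp (-K₁ * h +
          K₂ * (B (x + h • β
              + Real.sqrt h • S.mulVec (fun i => if ε i then (1 : ℝ) else -1))
            - B x)))
        ≤ ∑ ε : Fin d → Bool,
            ((1 - K₁ * h + (3 / 2) * K₁ ^ 2 * h ^ 2 + (3 / 2) * K₂ ^ 2 * C₃ ^ 2 * h)
              + (K₂ * Real.sqrt h * A ε + K₂ * ρ ε)) :=
          Finset.sum_le_sum fun ε _ => main ε
      _ = (2 : ℝ) ^ d * (1 - K₁ * h + (3 / 2) * K₁ ^ 2 * h ^ 2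
            + (3 / 2) * K₂ ^ 2 * C₃ ^ 2 * h)
          + (K₂ * Real.sqrt h * ∑ ε : Fin d → Bool, A ε)
          + K₂ * ∑ ε : Fin d → Bool, ρ ε := by
          simp only [Finset.sum_add_distrib, Finset.sum_const, hcard, ← Finset.mul_sum,
            nsmul_eq_mul]
          push_cast
          ring
      _ ≤ (2 : ℝ) ^ d * ((1 - K₁ * h + (3 / 2) * K₁ ^ 2 * h ^ 2
            + (3 / 2) * K₂ ^ 2 * C₃ ^ 2 * h) + K₂ * (h * C₂)) := by
          rw [hAsum, mul_zero, add_zero]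
          have hρsum : ∑ ε : Fin d → Bool, ρ ε ≤ (2 : ℝ) ^ d * (h * C₂) := by
            calc ∑ ε : Fin d → Bool, ρ ε ≤ ∑ _ε : Fin d → Bool, h * C₂ :=
                  Finset.sum_le_sum fun ε _ => (le_abs_self _).trans (hρbd ε)
              _ = (2 : ℝ) ^ d * (h * C₂) := by
                  rw [Finset.sum_const, hcard]; push_cast; ring
          linarith [mul_le_mul_of_nonneg_left hρsum hK₂.le]
  have h2d : (0 : ℝ) < 2 ^ d := by positivity
  rw [div_le_iff₀ h2d]
  refine hsumbd.trans ?_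
  have hfinal : (1 - K₁ * h + (3 / 2) * K₁ ^ 2 * h ^ 2
      + (3 / 2) * K₂ ^ 2 * C₃ ^ 2 * h) + K₂ * (h * C₂) ≤ 1 - h := by
    have hmul : h * (K₁ ^ 2 * h) ≤ h * (1 / 2) := mul_le_mul_of_nonneg_left hK1sq hh.le
    rw [hK₁def] at hmul ⊢
    linarith [hmul, hK₂C₃h]
  calc (2 : ℝ) ^ d * ((1 - K₁ * h + (3 / 2) * K₁ ^ 2 * h ^ 2
        + (3 / 2) * K₂ ^ 2 * C₃ ^ 2 * h) + K₂ * (h * C₂))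
      ≤ (2 : ℝ) ^ d * (1 - h) := mul_le_mul_of_nonneg_left hfinal h2d.le
    _ = (1 - h) * 2 ^ d := by ring
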